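/- arXiv:2004.10198 — 2 statements merged into one kernel-verified Lean document; each statement's English description precedes it below -/
import Mathlib

section
/- If n ≥ 6 and C is a perfect code of the Lucas cube Λ_n, then the all-zeros string 0^n belongs to C. -/
def isFib {n : ℕ} (b : Fin n → Bool) : Prop :=
  ∀ i : Fin n, ∀ h : (i : ℕ) + 1 < n, ¬(b i = true ∧ b ⟨(i : ℕ) + 1, h⟩ = true)

def isLucas {n : ℕ} (b : Fin n → Bool) : Prop :=
  isFib b ∧ ∀ h0 : 0 < n, ¬(b ⟨0, h0⟩ = true ∧ b ⟨n - 1, by omega⟩ = true)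

def wt {n : ℕ} (b : Fin n → Bool) : ℕ :=
  (Finset.univ.filter fun i => b i = true).card

def lucasCube (n : ℕ) : SimpleGraph {b : Fin n → Bool // isLucas b} where
  Adj x y := hammingDist x.1 y.1 = 1
  symm := ⟨fun x y h => by change hammingDist x.1 y.1 = 1 at h; show hammingDist y.1 x.1 = 1; rw [hammingDist_comm]; exact h⟩
  loopless := ⟨fun x h => by change hammingDist x.1 x.1 = 1 at h; rw [hammingDist_self] at h; exact absurd h (by omega)⟩

def IsPerfectCode {V : Type*} (G : SimpleGraph V) (C : Set V) : Prop :=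
  ∀ v : V, ∃! c : V, c ∈ C ∧ (v = c ∨ G.Adj v c)

def ch (a b : ℤ) : ℕ := if 0 ≤ a ∧ 0 ≤ b then a.toNat.choose b.toNat else 0

namespace PC
open Finset

attribute [local instance] Classical.propDecidable

noncomputable section
variable {n : ℕ}

abbrev Vtx (n : ℕ) := {b : Fin n → Bool // isLucas b}

instance : Fintype (Vtx n) := Fintype.ofFinite _

def supp (b : Fin n → Bool) : Finset (Fin n) := Finset.univ.filter (fun i => b i = true)

lemma mem_supp {b : Fin n → Bool} {i : Fin n} : i ∈ supp b ↔ b i = true := by simp [supp]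

lemma wt_eq_card (b : Fin n → Bool) : wt b = (supp b).card := by
  simp [wt, supp]

lemma eq_of_supp_eq {b b' : Fin n → Bool} (h : supp b = supp b') : b = b' := by
  funext j
  have h2 : b j = true ↔ b' j = true := by rw [← mem_supp, ← mem_supp, h]
  cases hb : b j <;> cases hb' : b' j <;> simp_all

lemma adj_exists {v c : Vtx n} (h : (lucasCube n).Adj v c) :
    ∃ j, v.1 j ≠ c.1 j ∧ ∀ k, k ≠ j → v.1 k = c.1 k := by
  have h' : hammingDist v.1 c.1 = 1 := h
  unfold hammingDist at h'
  obtain ⟨j, hj⟩ := Finset.card_eq_one.mp h'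
  refine ⟨j, ?_, ?_⟩
  · have : j ∈ ({j} : Finset (Fin n)) := Finset.mem_singleton_self j
    rw [← hj, Finset.mem_filter] at this
    exact this.2
  · intro k hk
    by_contra hne
    have : k ∈ ({j} : Finset (Fin n)) := by
      rw [← hj, Finset.mem_filter]; exact ⟨Finset.mem_univ _, hne⟩
    exact hk (Finset.mem_singleton.mp this)

lemma adj_of {v c : Vtx n} (j : Fin n) (hne : v.1 j ≠ c.1 j)
    (hk : ∀ k, k ≠ j → v.1 k = c.1 k) : (lucasCube n).Adj v c := by
  show hammingDist v.1 c.1 = 1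
  unfold hammingDist
  apply Finset.card_eq_one.mpr
  refine ⟨j, ?_⟩
  ext k
  simp only [Finset.mem_filter, Finset.mem_univ, true_and, Finset.mem_singleton]
  constructor
  · intro hd; by_contra hkj; exact hd (hk k hkj)
  · rintro rfl; exact hne


/-- Support form of adjacency. -/
lemma adj_supp {v c : Vtx n} (h : (lucasCube n).Adj v c) :
    (∃ j ∈ supp v.1, supp c.1 = (supp v.1).erase j) ∨
    (∃ j, j ∉ supp v.1 ∧ supp c.1 = insert j (supp v.1)) := by
  obtain ⟨j, hne, hk⟩ := adj_exists h
  by_cases hv : v.1 j = true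
  · left
    refine ⟨j, mem_supp.mpr hv, ?_⟩
    ext k
    simp only [Finset.mem_erase, mem_supp]
    rcases eq_or_ne k j with rfl | hkj
    · simp only [ne_eq, not_true_eq_false, false_and, iff_false]
      intro hc; exact hne (hv.trans hc.symm)
    · simp [hkj, hk k hkj]
  · right
    have hv' : v.1 j = false := by simpa using hv
    have hc : c.1 j = true := by
      cases hcj : c.1 j
      · exact absurd (hv'.trans hcj.symm) hne
      · rfl
    refine ⟨j, by simp [mem_supp, hv'], ?_⟩
    ext k
    simp only [Finset.mem_insert, mem_supp]
    rcases eq_or_ne k j with rfl | hkj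
    · simp [hc]
    · simp [hkj, hk k hkj]

lemma adj_of_insert {v c : Vtx n} {j : Fin n} (hj : j ∉ supp v.1)
    (h : supp c.1 = insert j (supp v.1)) : (lucasCube n).Adj v c := by
  have hvj : v.1 j = false := by
    cases hb : v.1 j
    · rfl
    · exact absurd (mem_supp.mpr hb) hj
  have hcj : c.1 j = true := by
    rw [← mem_supp, h]; exact Finset.mem_insert_self _ _
  apply adj_of j
  · rw [hvj, hcj]; simp
  · intro k hkj
    have : k ∈ supp c.1 ↔ k ∈ supp v.1 := by
      rw [h, Finset.mem_insert]; simp [hkj]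
    rw [mem_supp, mem_supp] at this
    cases hv : v.1 k <;> cases hc : c.1 k <;> simp_all

lemma adj_wt {v c : Vtx n} (h : (lucasCube n).Adj v c) :
    wt v.1 = wt c.1 + 1 ∨ wt c.1 = wt v.1 + 1 := by
  rcases adj_supp h with ⟨j, hj, hs⟩ | ⟨j, hj, hs⟩
  · left
    rw [wt_eq_card, wt_eq_card, hs, Finset.card_erase_of_mem hj]
    have : 0 < (supp v.1).card := Finset.card_pos.mpr ⟨j, hj⟩
    omega
  · right
    rw [wt_eq_card, wt_eq_card, hs, Finset.card_insert_of_notMem hj]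

/-- Conditions on a support set making it a Lucas word. -/
def okS (S : Finset (Fin n)) : Prop :=
  (∀ a ∈ S, ∀ b ∈ S, (b : ℕ) = (a : ℕ) + 1 → False) ∧
  (∀ (h0 : 0 < n), ¬((⟨0, h0⟩ : Fin n) ∈ S ∧ (⟨n - 1, by omega⟩ : Fin n) ∈ S))

def mkB (S : Finset (Fin n)) : Fin n → Bool := fun j => decide (j ∈ S)

lemma supp_mkB (S : Finset (Fin n)) : supp (mkB S) = S := by
  ext k; simp [mem_supp, mkB]

lemma isLucas_mkB {S : Finset (Fin n)} (h : okS S) : isLucas (mkB S) := by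
  constructor
  · intro i hi hcon
    simp only [mkB, decide_eq_true_eq] at hcon
    exact h.1 i hcon.1 ⟨(i : ℕ) + 1, hi⟩ hcon.2 rfl
  · intro h0 hcon
    simp only [mkB, decide_eq_true_eq] at hcon
    exact h.2 h0 hcon

def mkV (S : Finset (Fin n)) (h : okS S) : Vtx n := ⟨mkB S, isLucas_mkB h⟩

lemma supp_mkV (S : Finset (Fin n)) (h : okS S) : supp (mkV S h).1 = S := supp_mkB S

lemma okS_of_subset {S T : Finset (Fin n)} (hST : S ⊆ T) (h : okS T) : okS S :=
  ⟨fun a ha b hb => h.1 a (hST ha) b (hST hb),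
   fun h0 hcon => h.2 h0 ⟨hST hcon.1, hST hcon.2⟩⟩

lemma okS_supp (v : Vtx n) : okS (supp v.1) := by
  constructor
  · intro a ha b hb hab
    have hbn : (a : ℕ) + 1 < n := by rw [← hab]; exact b.2
    refine v.2.1 a hbn ⟨mem_supp.mp ha, ?_⟩
    have : b = (⟨(a : ℕ) + 1, hbn⟩ : Fin n) := Fin.ext hab
    rw [← this]; exact mem_supp.mp hb
  · intro h0 hcon
    exact v.2.2 h0 ⟨mem_supp.mp hcon.1, mem_supp.mp hcon.2⟩

lemma vtx_eq_mkV (v : Vtx n) : v = mkV (supp v.1) (okS_supp v) := by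
  apply Subtype.ext
  apply eq_of_supp_eq
  rw [supp_mkV]

lemma vtx_eq_of_supp {v w : Vtx n} (h : supp v.1 = supp w.1) : v = w :=
  Subtype.ext (eq_of_supp_eq h)


/-- Domination relation. -/
def D (v c : Vtx n) : Prop := v = c ∨ (lucasCube n).Adj v c

def Wk (n k : ℕ) : Finset (Vtx n) := Finset.univ.filter (fun v => wt v.1 = k)

lemma mem_Wk {k : ℕ} {v : Vtx n} : v ∈ Wk n k ↔ wt v.1 = k := by simp [Wk]

lemma count_same {k : ℕ} (c : Vtx n) (hc : wt c.1 = k) :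
    ((Wk n k).filter (fun v => D v c)).card = 1 := by
  rw [Finset.card_eq_one]
  refine ⟨c, ?_⟩
  ext v
  simp only [Finset.mem_filter, mem_Wk, Finset.mem_singleton]
  constructor
  · rintro ⟨hv, rfl | hadj⟩
    · rfl
    · rcases adj_wt hadj with h | h <;> omega
  · rintro rfl; exact ⟨hc, Or.inl rfl⟩

lemma count_down {k : ℕ} (c : Vtx n) (hc : wt c.1 = k + 1) :
    ((Wk n k).filter (fun v => D v c)).card = k + 1 := by
  have hS : okS (supp c.1) := okS_supp c
  have himg : (Wk n k).filter (fun v => D v c) =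
      (supp c.1).image (fun m => mkV ((supp c.1).erase m)
        (okS_of_subset (Finset.erase_subset _ _) hS)) := by
    ext v
    simp only [Finset.mem_filter, mem_Wk, Finset.mem_image]
    constructor
    · rintro ⟨hv, rfl | hadj⟩
      · omega
      · rcases adj_supp hadj with ⟨j, hj, hs⟩ | ⟨j, hj, hs⟩
        · exfalso
          rw [wt_eq_card, hs, Finset.card_erase_of_mem hj] at hc
          have : 0 < (supp v.1).card := Finset.card_pos.mpr ⟨j, hj⟩
          rw [wt_eq_card] at hv
          omega
        · refine ⟨j, ?_, ?_⟩
          · rw [hs]; exact Finset.mem_insert_self _ _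
          · apply vtx_eq_of_supp
            rw [supp_mkV, hs, Finset.erase_insert hj]
    · rintro ⟨m, hm, rfl⟩
      have hsupp : supp (mkV ((supp c.1).erase m)
          (okS_of_subset (Finset.erase_subset _ _) hS)).1 = (supp c.1).erase m := supp_mkV _ _
      constructor
      · rw [wt_eq_card, hsupp, Finset.card_erase_of_mem hm]
        rw [wt_eq_card] at hc
        omega
      · refine Or.inr (adj_of_insert (j := m) ?_ ?_)
        · rw [hsupp]
          simp
        · rw [hsupp, Finset.insert_erase hm]
  rw [himg, Finset.card_image_of_injOn, ← wt_eq_card, hc]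
  intro a ha b hb hab
  have hse := congrArg (fun v => supp (Subtype.val v)) hab
  simp only [supp_mkV] at hse
  by_contra hne
  have h2 : a ∈ (supp c.1).erase b := Finset.mem_erase.mpr ⟨hne, ha⟩
  rw [← hse] at h2
  exact (Finset.mem_erase.mp h2).1 rfl


lemma D_wt_close {v c : Vtx n} (h : D v c) :
    wt v.1 = wt c.1 ∨ wt v.1 = wt c.1 + 1 ∨ wt c.1 = wt v.1 + 1 := by
  rcases h with rfl | h
  · exact Or.inl rfl
  · exact Or.inr (adj_wt h)

lemma count_far {k : ℕ} (c : Vtx n) (hc : k + 2 ≤ wt c.1 ∨ wt c.1 + 2 ≤ k) :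
    ((Wk n k).filter (fun v => D v c)).card = 0 := by
  rw [Finset.card_eq_zero, Finset.filter_eq_empty_iff]
  intro v hv
  rw [mem_Wk] at hv
  intro hD
  rcases D_wt_close hD with h | h | h <;> omega

lemma double_count (CF : Finset (Vtx n))
    (huniq : ∀ v : Vtx n, (CF.filter (fun c => D v c)).card = 1)
    (W : Finset (Vtx n)) :
    W.card = ∑ c ∈ CF, (W.filter (fun v => D v c)).card := by
  calc W.card = ∑ v ∈ W, 1 := by simp
    _ = ∑ v ∈ W, (CF.filter (fun c => D v c)).card := by
        exact Finset.sum_congr rfl (fun v _ => (huniq v).symm)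
    _ = ∑ v ∈ W, ∑ c ∈ CF, if D v c then 1 else 0 := by
        exact Finset.sum_congr rfl (fun v _ => Finset.card_filter _ _)
    _ = ∑ c ∈ CF, ∑ v ∈ W, if D v c then 1 else 0 := Finset.sum_comm
    _ = ∑ c ∈ CF, (W.filter (fun v => D v c)).card := by
        exact Finset.sum_congr rfl (fun c _ => (Finset.card_filter _ _).symm)


def succV (j : Fin n) : Fin n := ⟨(j.1 + 1) % n, Nat.mod_lt _ j.pos⟩
def predV (j : Fin n) : Fin n := ⟨(j.1 + (n - 1)) % n, Nat.mod_lt _ j.pos⟩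

lemma succV_spec (j : Fin n) :
    ((succV j).1 = 0 ∧ j.1 + 1 = n) ∨ ((succV j).1 = j.1 + 1 ∧ j.1 + 1 < n) := by
  have hj := j.isLt
  rcases Nat.lt_or_ge (j.1 + 1) n with h | h
  · exact Or.inr ⟨Nat.mod_eq_of_lt h, h⟩
  · have : j.1 + 1 = n := by omega
    exact Or.inl ⟨by simp [succV, this, Nat.mod_self], this⟩

lemma predV_spec (j : Fin n) :
    ((predV j).1 = n - 1 ∧ j.1 = 0) ∨ ((predV j).1 = j.1 - 1 ∧ 0 < j.1) := by
  have hj := j.isLt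
  have hn1 : 0 < n := j.pos
  rcases Nat.eq_zero_or_pos j.1 with h | h
  · refine Or.inl ⟨?_, h⟩
    show (j.1 + (n - 1)) % n = n - 1
    rw [h, Nat.zero_add, Nat.mod_eq_of_lt (by omega)]
  · refine Or.inr ⟨?_, h⟩
    show (j.1 + (n - 1)) % n = j.1 - 1
    have heq : j.1 + (n - 1) = n + (j.1 - 1) := by omega
    rw [heq, Nat.add_mod_left, Nat.mod_eq_of_lt (by omega)]

lemma succ_predV (hn : 6 ≤ n) (j : Fin n) : succV (predV j) = j := by
  have h1 := predV_spec j
  have h2 := succV_spec (predV j)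
  have hj := j.isLt
  apply Fin.ext
  omega

lemma okS_pair (hn : 6 ≤ n) {j k : Fin n} (h1 : k ≠ j) (h2 : k ≠ succV j)
    (h3 : k ≠ predV j) : okS ({j, k} : Finset (Fin n)) := by
  have hv1 : k.1 ≠ j.1 := fun h => h1 (Fin.ext h)
  have hv2 : k.1 ≠ (succV j).1 := fun h => h2 (Fin.ext h)
  have hv3 : k.1 ≠ (predV j).1 := fun h => h3 (Fin.ext h)
  have e1 := succV_spec j
  have e2 := predV_spec j
  have hj := j.isLt
  have hk := k.isLt
  constructor
  · intro a ha b hb hab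
    simp only [Finset.mem_insert, Finset.mem_singleton] at ha hb
    rcases ha with rfl | rfl <;> rcases hb with rfl | rfl <;> omega
  · intro h0 hcon
    obtain ⟨hc1, hc2⟩ := hcon
    simp only [Finset.mem_insert, Finset.mem_singleton, Fin.ext_iff] at hc1 hc2
    omega

lemma succV_not_mem (hn : 6 ≤ n) {v : Vtx n} {j : Fin n} (h1 : j ∈ supp v.1) :
    succV j ∉ supp v.1 := by
  intro h2
  rcases succV_spec j with ⟨hs, hn'⟩ | ⟨hs, hn'⟩
  · refine (okS_supp v).2 (by omega) ⟨?_, ?_⟩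
    · have : (⟨0, by omega⟩ : Fin n) = succV j := Fin.ext (by simp [hs])
      rw [this]; exact h2
    · have : (⟨n - 1, by omega⟩ : Fin n) = j := Fin.ext (by simp; omega)
      rw [this]; exact h1
  · exact (okS_supp v).1 j h1 (succV j) h2 hs

lemma predV_not_mem (hn : 6 ≤ n) {v : Vtx n} {j : Fin n} (h1 : j ∈ supp v.1) :
    predV j ∉ supp v.1 := by
  intro h2
  have := succV_not_mem hn h2
  rw [succ_predV hn] at this
  exact this h1

lemma triple_card (hn : 6 ≤ n) (j : Fin n) :
    ({j, succV j, predV j} : Finset (Fin n)).card = 3 := by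
  have e1 := succV_spec j
  have e2 := predV_spec j
  have hj := j.isLt
  rw [Finset.card_insert_of_notMem, Finset.card_insert_of_notMem, Finset.card_singleton]
  · simp only [Finset.mem_singleton, Fin.ext_iff]
    omega
  · simp only [Finset.mem_insert, Finset.mem_singleton, Fin.ext_iff]
    push_neg
    constructor <;> omega

lemma count_up (hn : 6 ≤ n) {c : Vtx n} (hc : wt c.1 = 1) :
    ((Wk n 2).filter (fun v => D v c)).card + 3 = n := by
  obtain ⟨j, hj⟩ : ∃ j, supp c.1 = {j} := by
    apply Finset.card_eq_one.mp
    rw [← wt_eq_card]; exact hc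
  set K : Finset (Fin n) := Finset.univ \ {j, succV j, predV j} with hK
  have hKcard : K.card + 3 = n := by
    rw [hK, Finset.card_sdiff_of_subset (Finset.subset_univ _), triple_card hn j,
      Finset.card_univ, Fintype.card_fin]
    omega
  have hbij : K.card = ((Wk n 2).filter (fun v => D v c)).card := by
    apply Finset.card_bij (fun k hk => mkV {j, k} (okS_pair hn
      (by simp [hK] at hk; tauto) (by simp [hK] at hk; tauto) (by simp [hK] at hk; tauto)))
    · -- maps into the filter
      intro k hk
      simp only [hK, Finset.mem_sdiff, Finset.mem_insert, Finset.mem_singleton] at hk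
      push_neg at hk
      obtain ⟨-, hkj, hks, hkp⟩ := hk
      rw [Finset.mem_filter, mem_Wk]
      constructor
      · rw [wt_eq_card, supp_mkV, Finset.card_insert_of_notMem (by simp [Ne.symm hkj]),
          Finset.card_singleton]
      · refine Or.inr ((adj_of_insert (j := k) ?_ ?_).symm)
        · rw [hj]; simp [hkj]
        · rw [supp_mkV, hj]
          rw [Finset.pair_comm]
    · -- injective
      intro a ha b hb hab
      have hse := congrArg (fun v => supp (Subtype.val v)) hab
      simp only [supp_mkV] at hse
      simp only [hK, Finset.mem_sdiff, Finset.mem_insert, Finset.mem_singleton] at ha hb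
      push_neg at ha hb
      have : a ∈ ({j, b} : Finset (Fin n)) := by rw [← hse]; simp
      simp only [Finset.mem_insert, Finset.mem_singleton] at this
      rcases this with h | h
      · exact absurd h ha.2.1
      · exact h
    · -- surjective
      intro v hv
      rw [Finset.mem_filter, mem_Wk] at hv
      obtain ⟨hv2, hD⟩ := hv
      rcases hD with rfl | hadj
      · omega
      rcases adj_supp hadj with ⟨m, hm, hs⟩ | ⟨m, hm, hs⟩
      · -- supp c = (supp v).erase m, so supp v = {m, j}
        have hsv : supp v.1 = insert m ({j} : Finset (Fin n)) := by
          rw [← hj, hs, Finset.insert_erase hm]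
        have hmj : m ≠ j := by
          intro h
          rw [h] at hsv
          have : wt v.1 = 1 := by rw [wt_eq_card, hsv]; simp
          omega
        have hjv : j ∈ supp v.1 := by rw [hsv]; simp
        have hmv : m ∈ supp v.1 := by rw [hsv]; simp
        have hms : m ≠ succV j := by
          intro h; rw [h] at hmv; exact succV_not_mem hn hjv hmv
        have hmp : m ≠ predV j := by
          intro h; rw [h] at hmv; exact predV_not_mem hn hjv hmv
        refine ⟨m, ?_, ?_⟩
        · simp [hK, hmj, hms, hmp]
        · apply vtx_eq_of_supp
          rw [supp_mkV, hsv, Finset.pair_comm]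
      · -- supp c = insert m (supp v) : impossible by cardinality
        exfalso
        rw [wt_eq_card, hs, Finset.card_insert_of_notMem hm, ← wt_eq_card, hv2] at hc
        omega
  omega


lemma okS_single (hn : 6 ≤ n) (j : Fin n) : okS ({j} : Finset (Fin n)) := by
  constructor
  · intro a ha b hb hab
    simp only [Finset.mem_singleton] at ha hb
    subst ha; subst hb; omega
  · intro h0 hcon
    simp only [Finset.mem_singleton, Fin.ext_iff] at hcon
    omega

def eV (hn : 6 ≤ n) (j : Fin n) : Vtx n := mkV {j} (okS_single hn j)

lemma W1_card (hn : 6 ≤ n) : (Wk n 1).card = n := by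
  have himg : Wk n 1 = Finset.univ.image (eV hn) := by
    ext v
    simp only [mem_Wk, Finset.mem_image, Finset.mem_univ, true_and]
    constructor
    · intro hv
      obtain ⟨j, hj⟩ := Finset.card_eq_one.mp (by rw [← wt_eq_card]; exact hv)
      refine ⟨j, vtx_eq_of_supp ?_⟩
      show supp (mkV {j} (okS_single hn j)).1 = supp v.1
      rw [supp_mkV, hj]
    · rintro ⟨j, rfl⟩
      rw [wt_eq_card]
      show (supp (mkV {j} (okS_single hn j)).1).card = 1
      rw [supp_mkV, Finset.card_singleton]
  rw [himg, Finset.card_image_of_injective _ ?_, Finset.card_univ, Fintype.card_fin]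
  intro a b hab
  have hse := congrArg (fun v => supp (Subtype.val v)) hab
  simp only [eV, supp_mkV] at hse
  exact Finset.singleton_injective hse

lemma sum_pred (m : ℕ) : 2 * ∑ b ∈ Finset.range m, (b - 1) = (m - 1) * (m - 2) := by
  cases m with
  | zero => simp
  | succ l =>
    rw [Finset.sum_range_succ']
    simp only [Nat.add_sub_cancel, Nat.zero_sub, add_zero]
    rw [mul_comm, Finset.sum_range_id_mul_two]
    have e1 : l + 1 - 1 = l := by omega
    have e2 : l + 1 - 2 = l - 1 := by omega
    rw [e2]

lemma okS_pairN (hn : 6 ≤ n) {a b : ℕ} (ha : a < n) (hb : b < n) (hab : a + 2 ≤ b)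
    (hw : ¬(a = 0 ∧ b = n - 1)) : okS ({⟨a, ha⟩, ⟨b, hb⟩} : Finset (Fin n)) := by
  constructor
  · intro x hx y hy hxy
    simp only [Finset.mem_insert, Finset.mem_singleton] at hx hy
    rcases hx with rfl | rfl <;> rcases hy with rfl | rfl <;> simp_all <;> omega
  · intro h0 hcon
    simp only [Finset.mem_insert, Finset.mem_singleton, Fin.ext_iff] at hcon
    omega

lemma nkey (n : ℕ) (hn : 6 ≤ n) : (n - 1) * (n - 2) + 3 * n = n * n + 2 := by
  obtain ⟨m, rfl⟩ : ∃ m, n = m + 2 := ⟨n - 2, by omega⟩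
  have e1 : m + 2 - 1 = m + 1 := by omega
  have e2 : m + 2 - 2 = m := by omega
  rw [e1, e2]
  ring

lemma W2_card (hn : 6 ≤ n) : 2 * (Wk n 2).card + 3 * n = n * n := by
  set R : Finset (ℕ × ℕ) :=
    ((Finset.range n) ×ˢ (Finset.range n)).filter (fun ab => ab.1 + 2 ≤ ab.2) with hR
  have memR : ∀ ab : ℕ × ℕ, ab ∈ R ↔ ab.1 < n ∧ ab.2 < n ∧ ab.1 + 2 ≤ ab.2 := by
    intro ab
    simp only [hR, Finset.mem_filter, Finset.mem_product, Finset.mem_range]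
    tauto
  set Q : Finset (ℕ × ℕ) := R.erase (0, n - 1) with hQ
  have memQ : ∀ ab : ℕ × ℕ, ab ∈ Q ↔
      ¬(ab.1 = 0 ∧ ab.2 = n - 1) ∧ ab.1 < n ∧ ab.2 < n ∧ ab.1 + 2 ≤ ab.2 := by
    intro ab
    rw [hQ, Finset.mem_erase, memR]
    constructor
    · rintro ⟨h1, h2⟩
      refine ⟨fun h => h1 (Prod.ext h.1 h.2), h2⟩
    · rintro ⟨h1, h2⟩
      exact ⟨fun h => h1 ⟨by rw [h], by rw [h]⟩, h2⟩
  have hbij : Q.card = (Wk n 2).card := by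
    apply Finset.card_bij (fun ab hab => mkV {⟨ab.1, ((memQ ab).mp hab).2.1⟩,
      ⟨ab.2, ((memQ ab).mp hab).2.2.1⟩}
      (okS_pairN hn _ _ ((memQ ab).mp hab).2.2.2 ((memQ ab).mp hab).1))
    · intro ab hab
      obtain ⟨h1, h2, h3, h4⟩ := (memQ ab).mp hab
      rw [mem_Wk, wt_eq_card, supp_mkV]
      rw [Finset.card_insert_of_notMem (by simp only [Finset.mem_singleton, Fin.ext_iff]; omega),
        Finset.card_singleton]
    · intro x hx y hy hxy
      have hse := congrArg (fun v => supp (Subtype.val v)) hxy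
      simp only [supp_mkV] at hse
      obtain ⟨hx1, hx2, hx3, hx4⟩ := (memQ x).mp hx
      obtain ⟨hy1, hy2, hy3, hy4⟩ := (memQ y).mp hy
      have h1 : (⟨x.1, hx2⟩ : Fin n) ∈ ({⟨y.1, hy2⟩, ⟨y.2, hy3⟩} : Finset (Fin n)) := by
        rw [← hse]; simp
      have h2 : (⟨x.2, hx3⟩ : Fin n) ∈ ({⟨y.1, hy2⟩, ⟨y.2, hy3⟩} : Finset (Fin n)) := by
        rw [← hse]; simp
      simp only [Finset.mem_insert, Finset.mem_singleton, Fin.ext_iff] at h1 h2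
      have : x.1 = y.1 ∧ x.2 = y.2 := by omega
      exact Prod.ext this.1 this.2
    · intro v hv
      rw [mem_Wk] at hv
      obtain ⟨a, b, hab, hs⟩ := Finset.card_eq_two.mp (by rw [← wt_eq_card]; exact hv)
      have hExy : ∃ x y : Fin n, supp v.1 = {x, y} ∧ (x : ℕ) < (y : ℕ) := by
        rcases Nat.lt_trichotomy (a : ℕ) (b : ℕ) with h | h | h
        · exact ⟨a, b, hs, h⟩
        · exact absurd (Fin.ext h) hab
        · exact ⟨b, a, by rw [hs, Finset.pair_comm], h⟩
      obtain ⟨x, y, hsxy, hlt⟩ := hExy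
      have hxm : x ∈ supp v.1 := by rw [hsxy]; simp
      have hym : y ∈ supp v.1 := by rw [hsxy]; simp
      have hok := okS_supp v
      have hstep : (y : ℕ) ≠ (x : ℕ) + 1 := fun h => hok.1 x hxm y hym h
      have hwrap : ¬((x : ℕ) = 0 ∧ (y : ℕ) = n - 1) := by
        rintro ⟨h1, h2⟩
        refine hok.2 (by omega) ⟨?_, ?_⟩
        · rw [show (⟨0, by omega⟩ : Fin n) = x from Fin.ext h1.symm]; exact hxm
        · rw [show (⟨n - 1, by omega⟩ : Fin n) = y from Fin.ext h2.symm]; exact hym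
      refine ⟨((x : ℕ), (y : ℕ)), (memQ _).mpr ⟨hwrap, x.isLt, y.isLt, by omega⟩, ?_⟩
      apply vtx_eq_of_supp
      rw [supp_mkV, hsxy]
  have hmemR : ((0 : ℕ), n - 1) ∈ R := (memR _).mpr ⟨by omega, by omega, by omega⟩
  have hQcard : Q.card + 1 = R.card := by
    rw [hQ, Finset.card_erase_of_mem hmemR]
    have := Finset.card_pos.mpr ⟨_, hmemR⟩
    omega
  have hRcard : 2 * R.card = (n - 1) * (n - 2) := by
    have hfib : R.card = ∑ b ∈ Finset.range n, (b - 1) := by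
      rw [Finset.card_eq_sum_card_fiberwise (f := Prod.snd) (t := Finset.range n)
        (fun x hx => by simpa using ((memR x).mp hx).2.1)]
      apply Finset.sum_congr rfl
      intro b hb
      rw [Finset.mem_range] at hb
      have hfil : R.filter (fun ab => ab.2 = b) = (Finset.range (b - 1)).image (fun a => (a, b)) := by
        ext ⟨u, w⟩
        simp only [Finset.mem_filter, Finset.mem_image, Finset.mem_range, memR]
        constructor
        · rintro ⟨⟨h1, h2, h3⟩, rfl⟩
          exact ⟨u, by omega, rfl⟩
        · rintro ⟨a', ha', heq⟩
          rw [Prod.mk.injEq] at heq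
          obtain ⟨rfl, rfl⟩ := heq
          exact ⟨⟨by omega, by omega, by omega⟩, rfl⟩
      rw [hfil, Finset.card_image_of_injective _ (fun u v h => (Prod.mk.injEq .. ▸ h).1),
        Finset.card_range]
    rw [hfib, sum_pred]
  have hkey : (n - 1) * (n - 2) + 3 * n = n * n + 2 := nkey n hn
  rw [← hbij]
  linarith


lemma sum_eval (CF : Finset (Vtx n)) (g : Vtx n → ℕ) (a1 a2 a3 : ℕ)
    (h0 : ∀ c ∈ CF, wt c.1 ≠ 0)
    (h1 : ∀ c ∈ CF, wt c.1 = 1 → g c = a1)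
    (h2 : ∀ c ∈ CF, wt c.1 = 2 → g c = a2)
    (h3 : ∀ c ∈ CF, wt c.1 = 3 → g c = a3)
    (h4 : ∀ c ∈ CF, 4 ≤ wt c.1 → g c = 0) :
    ∑ c ∈ CF, g c = a1 * (CF.filter (fun c => wt c.1 = 1)).card
      + a2 * (CF.filter (fun c => wt c.1 = 2)).card
      + a3 * (CF.filter (fun c => wt c.1 = 3)).card := by
  have split1 := (Finset.sum_filter_add_sum_filter_not CF (fun c => wt c.1 = 1) g)
  set CF2 := CF.filter (fun c => ¬ wt c.1 = 1) with hCF2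
  have split2 := (Finset.sum_filter_add_sum_filter_not CF2 (fun c => wt c.1 = 2) g)
  set CF3 := CF2.filter (fun c => ¬ wt c.1 = 2) with hCF3
  have split3 := (Finset.sum_filter_add_sum_filter_not CF3 (fun c => wt c.1 = 3) g)
  have sub2 : CF2 ⊆ CF := Finset.filter_subset _ _
  have sub3 : CF3 ⊆ CF := (Finset.filter_subset _ _).trans sub2
  have s1 : ∑ c ∈ CF.filter (fun c => wt c.1 = 1), g c
      = a1 * (CF.filter (fun c => wt c.1 = 1)).card := by
    rw [Finset.sum_congr rfl (fun c hc =>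
      h1 c (Finset.filter_subset _ _ hc) (Finset.mem_filter.mp hc).2),
      Finset.sum_const, smul_eq_mul, mul_comm]
  have hc2eq : CF2.filter (fun c => wt c.1 = 2) = CF.filter (fun c => wt c.1 = 2) := by
    rw [hCF2, Finset.filter_filter]
    exact Finset.filter_congr (fun c hc => ⟨fun h => h.2, fun h => ⟨by omega, h⟩⟩)
  have s2 : ∑ c ∈ CF2.filter (fun c => wt c.1 = 2), g c
      = a2 * (CF.filter (fun c => wt c.1 = 2)).card := by
    rw [Finset.sum_congr rfl (fun c hc =>
      h2 c (sub2 (Finset.filter_subset _ _ hc)) (Finset.mem_filter.mp hc).2),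
      Finset.sum_const, smul_eq_mul, mul_comm, hc2eq]
  have hc3eq : CF3.filter (fun c => wt c.1 = 3) = CF.filter (fun c => wt c.1 = 3) := by
    rw [hCF3, hCF2, Finset.filter_filter, Finset.filter_filter]
    exact Finset.filter_congr (fun c hc => ⟨fun h => h.2.2, fun h => ⟨by omega, by omega, h⟩⟩)
  have s3 : ∑ c ∈ CF3.filter (fun c => wt c.1 = 3), g c
      = a3 * (CF.filter (fun c => wt c.1 = 3)).card := by
    rw [Finset.sum_congr rfl (fun c hc =>
      h3 c (sub3 (Finset.filter_subset _ _ hc)) (Finset.mem_filter.mp hc).2),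
      Finset.sum_const, smul_eq_mul, mul_comm, hc3eq]
  have s4 : ∑ c ∈ CF3.filter (fun c => ¬ wt c.1 = 3), g c = 0 := by
    apply Finset.sum_eq_zero
    intro c hc
    have hmem := Finset.mem_filter.mp hc
    have hne3 := hmem.2
    have hne2 := (Finset.mem_filter.mp hmem.1).2
    have hne1 := (Finset.mem_filter.mp (Finset.mem_filter.mp hmem.1).1).2
    have hcCF : c ∈ CF := sub3 (Finset.filter_subset _ _ hc)
    exact h4 c hcCF (by have := h0 c hcCF; omega)
  linarith

theorem main (n : ℕ) (hn : 6 ≤ n) (C : Set (Vtx n))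
    (hC : IsPerfectCode (lucasCube n) C) (z : Vtx n) (hz : ∀ i, z.1 i = false) :
    z ∈ C := by
  by_contra hzC
  set CF : Finset (Vtx n) := Finset.univ.filter (fun v => v ∈ C) with hCF
  have memCF : ∀ v : Vtx n, v ∈ CF ↔ v ∈ C := by intro v; simp [hCF]
  have huniq : ∀ v : Vtx n, (CF.filter (fun c => D v c)).card = 1 := by
    intro v
    obtain ⟨c, hc, hun⟩ := hC v
    rw [Finset.card_eq_one]
    refine ⟨c, ?_⟩
    ext x
    simp only [Finset.mem_filter, Finset.mem_singleton]
    constructor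
    · rintro ⟨hx1, hx2⟩
      exact hun x ⟨(memCF x).mp hx1, hx2⟩
    · rintro rfl
      exact ⟨(memCF _).mpr hc.1, hc.2⟩
  -- facts about the zero vertex
  have hsz : supp z.1 = ∅ := by
    ext i; simp [mem_supp, hz i]
  have hwz : wt z.1 = 0 := by rw [wt_eq_card, hsz, Finset.card_empty]
  have hz0 : ∀ c : Vtx n, wt c.1 = 0 → c = z := by
    intro c h
    apply vtx_eq_of_supp
    have hsc : supp c.1 = ∅ := Finset.card_eq_zero.mp (by rw [← wt_eq_card]; exact h)
    rw [hsc, hsz]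
  have hCF0 : ∀ c ∈ CF, wt c.1 ≠ 0 := by
    intro c hc h
    exact hzC ((hz0 c h) ▸ (memCF c).mp hc)
  -- E0 : exactly one codeword of weight one
  have hDz : ∀ c ∈ CF, (D z c ↔ wt c.1 = 1) := by
    intro c hc
    constructor
    · intro hD
      rcases hD with rfl | hadj
      · exact absurd ((memCF _).mp hc) hzC
      · rcases adj_wt hadj with h | h <;> rw [hwz] at h <;> omega
    · intro h1
      obtain ⟨j, hj⟩ := Finset.card_eq_one.mp (by rw [← wt_eq_card]; exact h1)
      refine Or.inr (adj_of_insert (j := j) ?_ ?_)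
      · rw [hsz]; exact Finset.notMem_empty j
      · rw [hj, hsz]; simp
  have hc1 : (CF.filter (fun c => wt c.1 = 1)).card = 1 := by
    rw [← Finset.filter_congr hDz, huniq z]
  -- E1 : counting weight-one vertices
  have hW1 : (Wk n 1).card = n := W1_card hn
  have E1 : (Wk n 1).card = 1 * (CF.filter (fun c => wt c.1 = 1)).card
      + 2 * (CF.filter (fun c => wt c.1 = 2)).card
      + 0 * (CF.filter (fun c => wt c.1 = 3)).card := by
    rw [double_count CF huniq (Wk n 1)]
    apply sum_eval CF _ 1 2 0 hCF0
    · intro c hc h; exact count_same c h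
    · intro c hc h; exact count_down (k := 1) c (by omega)
    · intro c hc h; exact count_far (k := 1) c (by omega)
    · intro c hc h; exact count_far (k := 1) c (by omega)
  -- E2 : counting weight-two vertices
  have E2 : (Wk n 2).card = (n - 3) * (CF.filter (fun c => wt c.1 = 1)).card
      + 1 * (CF.filter (fun c => wt c.1 = 2)).card
      + 3 * (CF.filter (fun c => wt c.1 = 3)).card := by
    rw [double_count CF huniq (Wk n 2)]
    apply sum_eval CF _ (n - 3) 1 3 hCF0
    · intro c hc h
      have := count_up hn h
      omega
    · intro c hc h; exact count_same c h
    · intro c hc h; exact count_down (k := 2) c (by omega)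
    · intro c hc h; exact count_far (k := 2) c (by omega)
  have B := W2_card (n := n) hn
  -- final arithmetic contradiction
  set c2 := (CF.filter (fun c => wt c.1 = 2)).card with hc2
  set c3 := (CF.filter (fun c => wt c.1 = 3)).card with hc3
  rw [hc1] at E1 E2
  obtain ⟨q, r, hr3, hnqr⟩ : ∃ q r, r < 3 ∧ n = 3 * q + r := ⟨n / 3, n % 3, by omega, by omega⟩
  have hsq : n * n = 9 * (q * q) + 6 * (q * r) + r * r := by rw [hnqr]; ring
  rw [hsq] at B
  have hs : ∃ s, s = q * q := ⟨_, rfl⟩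
  obtain ⟨s, hs⟩ := hs
  rw [← hs] at B
  have ht : ∃ t, t = q * r := ⟨_, rfl⟩
  obtain ⟨t, ht⟩ := ht
  rw [← ht] at B
  clear hs ht hsq
  interval_cases r <;> omega

end
end PC

/-- If n ≥ 6 and C is a perfect code of Λ_n, then 0^n ∈ C. -/
theorem stmt11 (n : ℕ) (hn : 6 ≤ n) (C : Set {b : Fin n → Bool // isLucas b})
    (hC : IsPerfectCode (lucasCube n) C) :
    (⟨fun _ => false, by constructor <;> simp [isFib]⟩ : {b : Fin n → Bool // isLucas b}) ∈ C := by
  exact PC.main n hn C hC _ (fun i => rfl)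
end

section
/- Let p ≥ 2 and n = 2^p - 1, and let D be a Hamming code of length n (a linear perfect code of Q_n containing 1^n). Then C = D \ {1^n} is a perfect code of both Λ_n(1^{n-1}) and Λ_n(1^{n-2}), of cardinality 2^n/(n+1) - 1. -/
def hypercube (n : ℕ) : SimpleGraph (Fin n → ZMod 2) where
  Adj x y := hammingDist x y = 1
  symm := ⟨fun x y h => by exact (hammingDist_comm _ _).trans h⟩
  loopless := ⟨fun x h => by
    exact absurd ((hammingDist_self _).symm.trans h) (by omega)⟩

/-- Some circulation of the string b contains 1^s as a substring. -/
def hasCircOnes (n s : ℕ) (b : Fin n → ZMod 2) : Prop :=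
  ∃ i : Fin n, ∃ t : ℕ, t + s ≤ n ∧ ∀ j : ℕ, j < s →
    b ⟨((i : ℕ) + t + j) % n, Nat.mod_lt _ (Nat.lt_of_le_of_lt (Nat.zero_le _) i.isLt)⟩
      = 1

/-- The generalized Lucas cube Λ_n(1^s). -/
def genLucas (n s : ℕ) : SimpleGraph {b : Fin n → ZMod 2 // ¬ hasCircOnes n s b} where
  Adj x y := hammingDist x.1 y.1 = 1
  symm := ⟨fun x y h => by exact (hammingDist_comm _ _).trans h⟩
  loopless := ⟨fun x h => by
    exact absurd ((hammingDist_self _).symm.trans h) (by omega)⟩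

lemma zmod2_ne {a b : ZMod 2} (h : a ≠ b) : a = b + 1 := by revert a b; decide

lemma hammingDist_eq' {n : ℕ} (x y : Fin n → ZMod 2) :
    hammingDist x y = (Finset.univ.filter fun i => x i ≠ y i).card := rfl

/-- Lemma A: a string with a cyclic run of s ones has at most n - s zeros. -/
lemma circ_ones_count {n s : ℕ} {b : Fin n → ZMod 2} (h : hasCircOnes n s b) :
    hammingDist b (fun _ => (1 : ZMod 2)) ≤ n - s := by
  obtain ⟨i, t, hts, hb⟩ := h
  have hn : 0 < n := i.pos
  have hsF : s ≤ (Finset.univ.filter (fun k : Fin n => b k = 1)).card := by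
    have := Finset.card_le_card_of_injOn
      (f := fun j : ℕ => (⟨((i : ℕ) + t + j) % n, Nat.mod_lt _ hn⟩ : Fin n))
      (s := Finset.range s) (t := Finset.univ.filter (fun k : Fin n => b k = 1))
      (fun j hj => by
        simp only [Finset.mem_filter, Finset.mem_univ, true_and]
        simpa using hb j (Finset.mem_range.mp hj))
      (by
        intro j1 h1 j2 h2 heq
        have heq' : ((i : ℕ) + t + j1) % n = ((i : ℕ) + t + j2) % n :=
          congrArg Fin.val heq
        have : j1 % n = j2 % n := Nat.ModEq.add_left_cancel' ((i : ℕ) + t) heq'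
        have hj1 : j1 < n := lt_of_lt_of_le (Finset.mem_range.mp h1) (by omega)
        have hj2 : j2 < n := lt_of_lt_of_le (Finset.mem_range.mp h2) (by omega)
        rwa [Nat.mod_eq_of_lt hj1, Nat.mod_eq_of_lt hj2] at this)
    simpa using this
  have hsplit := Finset.card_filter_add_card_filter_not
    (s := Finset.univ) (p := fun k : Fin n => b k = 1)
  simp only [Finset.card_univ, Fintype.card_fin] at hsplit
  have hgoal : hammingDist b (fun _ => (1 : ZMod 2)) =
      (Finset.univ.filter (fun a : Fin n => ¬ b a = 1)).card := rfl
  rw [hgoal]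
  omega

/-- Lemma B: a string with at most one zero has a cyclic run of s ≤ n-1 ones. -/
lemma near_ones_circ {n s : ℕ} (hn : 0 < n) (hs : s ≤ n - 1)
    {b : Fin n → ZMod 2} (h : hammingDist b (fun _ => (1 : ZMod 2)) ≤ 1) :
    hasCircOnes n s b := by
  rw [hammingDist_eq'] at h
  set F := Finset.univ.filter (fun k : Fin n => ¬ b k = 1) with hF
  have hF' : F.card ≤ 1 := by simpa [hF] using h
  interval_cases hc : F.card
  · have he : F = ∅ := Finset.card_eq_zero.mp hc
    refine ⟨⟨0, hn⟩, 0, by omega, fun j hj => ?_⟩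
    by_contra hb
    have : (⟨(0 + 0 + j) % n, Nat.mod_lt _ hn⟩ : Fin n) ∈ F := by
      simp only [hF, Finset.mem_filter, Finset.mem_univ, true_and]
      exact hb
    simp [he] at this
  · obtain ⟨k, hk⟩ := Finset.card_eq_one.mp hc
    refine ⟨⟨((k : ℕ) + 1) % n, Nat.mod_lt _ hn⟩, 0, by omega, fun j hj => ?_⟩
    by_contra hb
    have hmem : (⟨(((k : ℕ) + 1) % n + 0 + j) % n, Nat.mod_lt _ hn⟩ : Fin n) ∈ F := by
      simp only [hF, Finset.mem_filter, Finset.mem_univ, true_and]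
      exact hb
    rw [hk, Finset.mem_singleton] at hmem
    have hval : (((k : ℕ) + 1) % n + 0 + j) % n = (k : ℕ) := congrArg Fin.val hmem
    have hval' : ((k : ℕ) + 1 + j) % n = (k : ℕ) := by
      rw [show ((k : ℕ) + 1) % n + 0 + j = ((k : ℕ) + 1) % n + j by ring,
        Nat.mod_add_mod] at hval
      exact hval
    have hkn : (k : ℕ) < n := k.isLt
    rcases lt_or_ge ((k : ℕ) + 1 + j) n with h' | h'
    · rw [Nat.mod_eq_of_lt h'] at hval'; omega
    · rw [Nat.mod_eq_sub_mod h', Nat.mod_eq_of_lt (by omega)] at hval'; omega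

lemma update_filter {n : ℕ} (d : Fin n → ZMod 2) (k : Fin n) (a : ZMod 2) (ha : a ≠ d k) :
    (Finset.univ.filter fun i => Function.update d k a i ≠ d i) = {k} := by
  ext i
  simp only [Finset.mem_filter, Finset.mem_univ, true_and, Finset.mem_singleton]
  rcases eq_or_ne i k with rfl | hik
  · simp [ha]
  · simp [Function.update_of_ne hik, hik]

lemma dist_le_one_iff {n : ℕ} (x y : Fin n → ZMod 2) :
    hammingDist x y ≤ 1 ↔ x = y ∨ hammingDist x y = 1 := by
  constructor
  · intro h
    rcases Nat.le_one_iff_eq_zero_or_eq_one.mp h with h0 | h1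
    · exact Or.inl (hammingDist_eq_zero.mp h0)
    · exact Or.inr h1
  · rintro (rfl | h1)
    · simp
    · omega

/-- Lemma C: codewords other than 1^n are at distance ≥ 3 from 1^n. -/
lemma code_far {n : ℕ} {D : Set (Fin n → ZMod 2)}
    (hD : IsPerfectCode (hypercube n) D)
    (h1 : (fun _ => (1 : ZMod 2)) ∈ D)
    {d : Fin n → ZMod 2} (hd : d ∈ D) (hne : d ≠ fun _ => (1 : ZMod 2)) :
    3 ≤ hammingDist d (fun _ => (1 : ZMod 2)) := by
  by_contra hlt
  push_neg at hlt
  have hgoal : hammingDist d (fun _ => (1 : ZMod 2)) =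
      (Finset.univ.filter (fun a : Fin n => ¬ d a = 1)).card := rfl
  have hpos : 0 < hammingDist d (fun _ => (1 : ZMod 2)) := by
    rcases Nat.eq_zero_or_pos (hammingDist d (fun _ => (1 : ZMod 2))) with h0 | h
    · exact absurd (hammingDist_eq_zero.mp h0) hne
    · exact h
  rw [hgoal] at hlt hpos
  obtain ⟨k, hk⟩ := Finset.card_pos.mp hpos
  have hdk : ¬ d k = 1 := (Finset.mem_filter.mp hk).2
  set v : Fin n → ZMod 2 := Function.update d k 1 with hv
  have hvd : hammingDist v d = 1 := by
    rw [hammingDist_eq', update_filter d k 1 (fun h => hdk h.symm)]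
    simp
  have hvone : hammingDist v (fun _ => (1 : ZMod 2)) ≤ 1 := by
    have hfe : (Finset.univ.filter fun i => v i ≠ (fun _ => (1 : ZMod 2)) i) =
        (Finset.univ.filter (fun a : Fin n => ¬ d a = 1)).erase k := by
      ext i
      simp only [Finset.mem_filter, Finset.mem_univ, true_and, Finset.mem_erase, ne_eq]
      rcases eq_or_ne i k with rfl | hik
      · simp [hv, Function.update_self]
      · simp [hv, Function.update_of_ne hik, hik]
    rw [hammingDist_eq', hfe, Finset.card_erase_of_mem hk]
    omega
  obtain ⟨c, _, huniq⟩ := hD v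
  have e1 : d = c := huniq d ⟨hd, Or.inr hvd⟩
  have e2 : (fun _ => (1 : ZMod 2)) = c :=
    huniq _ ⟨h1, (dist_le_one_iff _ _).mp hvone⟩
  exact hne (e1.trans e2.symm)

/-- Cardinality of a closed ball of radius 1. -/
lemma ball_card {n : ℕ} (d : Fin n → ZMod 2) :
    (Finset.univ.filter (fun v => hammingDist v d ≤ 1)).card = n + 1 := by
  classical
  have himg : (Finset.univ.filter (fun v => hammingDist v d ≤ 1)) =
      Finset.image (fun o : Option (Fin n) =>
        o.elim d (fun i => Function.update d i (d i + 1))) Finset.univ := by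
    ext v
    simp only [Finset.mem_filter, Finset.mem_univ, true_and, Finset.mem_image]
    constructor
    · intro h
      rcases (dist_le_one_iff v d).mp h with rfl | h1
      · exact ⟨none, rfl⟩
      · have h1' : (Finset.univ.filter fun i => v i ≠ d i).card = 1 := h1
        obtain ⟨k, hk⟩ := Finset.card_eq_one.mp h1'
        refine ⟨some k, ?_⟩
        have hkmem : k ∈ Finset.univ.filter fun i => v i ≠ d i := by
          rw [hk]; exact Finset.mem_singleton_self k
        have hvk : v k ≠ d k := (Finset.mem_filter.mp hkmem).2
        funext i
        rcases eq_or_ne i k with rfl | hik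
        · simp only [Option.elim, Function.update_self]
          exact (zmod2_ne hvk).symm
        · simp only [Option.elim, Function.update_of_ne hik]
          by_contra hvi
          have : i ∈ Finset.univ.filter fun j => v j ≠ d j := by
            simp only [Finset.mem_filter, Finset.mem_univ, true_and]
            exact fun h => hvi h.symm
          rw [hk, Finset.mem_singleton] at this
          exact hik this
    · rintro ⟨o, -, rfl⟩
      cases o with
      | none => simp
      | some i =>
        have : hammingDist (Function.update d i (d i + 1)) d = 1 := by
          rw [hammingDist_eq', update_filter d i (d i + 1) (by
            intro h; exact one_ne_zero (by linear_combination h))]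
          simp
        simp only [Option.elim]
        omega
  rw [himg, Finset.card_image_of_injective _ ?_, Finset.card_univ,
    Fintype.card_option, Fintype.card_fin]
  intro o1 o2 heq
  have key : ∀ (i : Fin n), Function.update d i (d i + 1) ≠ d := by
    intro i h
    have := congrFun h i
    rw [Function.update_self] at this
    exact one_ne_zero (by linear_combination this)
  match o1, o2 with
  | none, none => rfl
  | none, some i => exact absurd heq.symm (key i)
  | some i, none => exact absurd heq (key i)
  | some i, some j =>
    simp only [Option.elim] at heq
    congr 1
    by_contra hij
    have := congrFun heq i
    rw [Function.update_self, Function.update_of_ne (by exact fun h => hij h)] at this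
    exact one_ne_zero (by linear_combination this)

/-- Counting: a perfect code in the hypercube has size 2^n / (n+1). -/
lemma code_count {n : ℕ} {D : Set (Fin n → ZMod 2)}
    (hD : IsPerfectCode (hypercube n) D) [Fintype D] :
    2 ^ n = (Fintype.card D) * (n + 1) := by
  classical
  set g : (Fin n → ZMod 2) → (Fin n → ZMod 2) := fun v => Classical.choose (hD v) with hg
  have hspec : ∀ v, (g v ∈ D ∧ (v = g v ∨ (hypercube n).Adj v (g v))) ∧
      ∀ y, (y ∈ D ∧ (v = y ∨ (hypercube n).Adj v y)) → y = g v :=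
    fun v => Classical.choose_spec (hD v)
  have hmem : ∀ v, g v ∈ D.toFinset := fun v => Set.mem_toFinset.mpr (hspec v).1.1
  have hcount := Finset.card_eq_sum_card_fiberwise (f := g) (s := Finset.univ)
    (t := D.toFinset) (fun v _ => hmem v)
  have hfiber : ∀ d ∈ D.toFinset,
      (Finset.univ.filter (fun v => g v = d)).card = n + 1 := by
    intro d hd
    rw [← ball_card d]
    congr 1
    ext v
    simp only [Finset.mem_filter, Finset.mem_univ, true_and]
    constructor
    · intro h
      subst h
      rcases (hspec v).1.2 with h | h
      · simp [← h]
      · have : hammingDist v (g v) = 1 := h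
        omega
    · intro h
      exact ((hspec v).2 d ⟨Set.mem_toFinset.mp hd, (dist_le_one_iff v d).mp h⟩).symm
  rw [Finset.sum_congr rfl hfiber, Finset.sum_const, smul_eq_mul,
    Set.toFinset_card, Finset.card_univ] at hcount
  rw [← hcount]
  simp

/-- For n = 2^p - 1 (p ≥ 2) and D a Hamming code (linear perfect code of Q_n
containing 1^n), C = D \ {1^n} is a perfect code of both Λ_n(1^(n-1)) and
Λ_n(1^(n-2)), of cardinality 2^n/(n+1) - 1. -/
theorem stmt19 (p n : ℕ) (hp : 2 ≤ p) (hn : n = 2 ^ p - 1)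
    (D : Submodule (ZMod 2) (Fin n → ZMod 2))
    (hD : IsPerfectCode (hypercube n) (D : Set (Fin n → ZMod 2)))
    (h1 : (fun _ => (1 : ZMod 2)) ∈ D) :
    IsPerfectCode (genLucas n (n - 1))
      {x : {b : Fin n → ZMod 2 // ¬ hasCircOnes n (n - 1) b} |
        x.1 ∈ D ∧ x.1 ≠ fun _ => (1 : ZMod 2)}
    ∧ IsPerfectCode (genLucas n (n - 2))
      {x : {b : Fin n → ZMod 2 // ¬ hasCircOnes n (n - 2) b} |
        x.1 ∈ D ∧ x.1 ≠ fun _ => (1 : ZMod 2)}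
    ∧ {x : {b : Fin n → ZMod 2 // ¬ hasCircOnes n (n - 1) b} |
        x.1 ∈ D ∧ x.1 ≠ fun _ => (1 : ZMod 2)}.ncard = 2 ^ n / (n + 1) - 1 := by
  classical
  have hp4 : 4 ≤ 2 ^ p := by
    calc (4 : ℕ) = 2 ^ 2 := rfl
    _ ≤ 2 ^ p := Nat.pow_le_pow_right (by norm_num) hp
  have hn3 : 3 ≤ n := by omega
  -- key: the perfect code property for both Lucas cubes
  have key : ∀ s : ℕ, n - 2 ≤ s → s ≤ n - 1 →
      IsPerfectCode (genLucas n s)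
        {x : {b : Fin n → ZMod 2 // ¬ hasCircOnes n s b} |
          x.1 ∈ D ∧ x.1 ≠ fun _ => (1 : ZMod 2)} := by
    intro s hs1 hs2 v
    obtain ⟨c, ⟨hcD, hvc⟩, huniq⟩ := hD v.1
    have hcne : c ≠ fun _ => (1 : ZMod 2) := by
      rintro rfl
      have hdist : hammingDist v.1 (fun _ => (1 : ZMod 2)) ≤ 1 := by
        rcases hvc with h | h
        · rw [h]; simp
        · have : hammingDist v.1 (fun _ => (1 : ZMod 2)) = 1 := h
          omega
      exact v.2 (near_ones_circ (by omega) hs2 hdist)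
    have hcfar : 3 ≤ hammingDist c (fun _ => (1 : ZMod 2)) :=
      code_far hD h1 hcD hcne
    have hcnot : ¬ hasCircOnes n s c := by
      intro hcc
      have := circ_ones_count hcc
      omega
    refine ⟨⟨c, hcnot⟩, ⟨⟨hcD, hcne⟩, ?_⟩, ?_⟩
    · rcases hvc with h | h
      · exact Or.inl (Subtype.ext h)
      · exact Or.inr h
    · rintro y ⟨⟨hyD, -⟩, hy⟩
      apply Subtype.ext
      apply huniq y.1
      refine ⟨hyD, ?_⟩
      rcases hy with h | h
      · exact Or.inl (congrArg Subtype.val h)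
      · exact Or.inr h
  refine ⟨key _ (by omega) le_rfl, key _ le_rfl (by omega), ?_⟩
  -- cardinality
  have himg : Subtype.val '' {x : {b : Fin n → ZMod 2 // ¬ hasCircOnes n (n - 1) b} |
      x.1 ∈ D ∧ x.1 ≠ fun _ => (1 : ZMod 2)}
      = (D : Set (Fin n → ZMod 2)) \ {fun _ => (1 : ZMod 2)} := by
    ext d
    constructor
    · rintro ⟨x, ⟨hxD, hxne⟩, rfl⟩
      exact ⟨hxD, hxne⟩
    · rintro ⟨hdD, hdne⟩
      have hdne' : d ≠ fun _ => (1 : ZMod 2) := hdne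
      have hfar : 3 ≤ hammingDist d (fun _ => (1 : ZMod 2)) :=
        code_far hD h1 hdD hdne'
      have hnot : ¬ hasCircOnes n (n - 1) d := by
        intro hcc
        have := circ_ones_count hcc
        omega
      exact ⟨⟨d, hnot⟩, ⟨hdD, hdne'⟩, rfl⟩
  have hinj : Function.Injective (Subtype.val :
      {b : Fin n → ZMod 2 // ¬ hasCircOnes n (n - 1) b} → (Fin n → ZMod 2)) :=
    Subtype.val_injective
  rw [← Set.ncard_image_of_injective _ hinj, himg]
  have hfin : (D : Set (Fin n → ZMod 2)).Finite := Set.toFinite _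
  rw [Set.ncard_diff_singleton_of_mem h1]
  have hcard : 2 ^ n = (Fintype.card D) * (n + 1) := code_count hD
  have hDcard : (D : Set (Fin n → ZMod 2)).ncard = Fintype.card D := by
    rw [Set.ncard_eq_toFinset_card']
    simp [Set.toFinset_card]
  rw [hDcard, Nat.div_eq_of_eq_mul_left (by omega) hcard]
end
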